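/- arXiv:2304.02337 — 2 statements merged into one kernel-verified Lean document; each statement's English description precedes it below -/
import Mathlib

section
/- Let α, β ∈ 𝔽_q^* and let r, s be positive integers. Then for every integer d ≥ 0, S_d(α; r)·S_d(β; s) = S_d(αβ; r+s) + Σ_{i+j=r+s, i,j≥1} Δ^j_{r,s}·S_d(αβ, 1; i, j), where the coefficients Δ^j_{r,s} ∈ 𝔽_q are viewed inside K_∞. -/
set_option linter.unusedSectionVars false
set_option maxHeartbeats 1000000


open scoped BigOperators TensorProduct

noncomputable section

/-- A letter `x_{n,ε}` of the alphabet `Γ`: a positive integer weight and a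
character `ε ∈ 𝔽_q^*`. -/
abbrev Letter (F : Type) [Field F] := ℕ+ × Fˣ

/-- A word over the alphabet `Γ`. -/
abbrev Word (F : Type) [Field F] := List (Letter F)

/-- `𝔇`: the free `𝔽_q`-vector space on the words over `Γ`. -/
abbrev Dalg (F : Type) [Field F] := Word F →₀ F

variable {F : Type} [Field F] [Fintype F]

/-- The word `w`, viewed as a basis element of `𝔇`. -/
def wd (w : Word F) : Dalg F := Finsupp.single w 1

/-- Concatenation of the letter `x` on the left, as a linear map on `𝔇`. -/
def consL (x : Letter F) : Dalg F →ₗ[F] Dalg F :=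
  Finsupp.lmapDomain F F (fun w => x :: w)

/-- The coefficients `Δ^j_{a,b} ∈ 𝔽_q`. -/
def deltaCoeff (F : Type) [Field F] [Fintype F] (a b j : ℕ) : F :=
  if (Fintype.card F - 1) ∣ j then
    ((((-1) ^ (a - 1) * (Nat.choose (j - 1) (a - 1)) +
        (-1) ^ (b - 1) * (Nat.choose (j - 1) (b - 1)) : ℤ)) : F)
  else 0

/-- The data of the diamond product `⋄` and the shuffle product `⧢` on `𝔇`,
as `𝔽_q`-bilinear maps satisfying the defining recursive equations. -/
structure ShuffleData (F : Type) [Field F] [Fintype F] where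
  dia : Dalg F →ₗ[F] Dalg F →ₗ[F] Dalg F
  sh : Dalg F →ₗ[F] Dalg F →ₗ[F] Dalg F
  dia_nil_left : ∀ v : Dalg F, dia (wd []) v = v
  dia_nil_right : ∀ v : Dalg F, dia v (wd []) = v
  sh_nil_left : ∀ v : Dalg F, sh (wd []) v = v
  sh_nil_right : ∀ v : Dalg F, sh v (wd []) = v
  dia_cons : ∀ (a b : ℕ+) (α β : Fˣ) (u v : Word F),
    dia (wd ((a, α) :: u)) (wd ((b, β) :: v)) =
      consL (a + b, α * β) (sh (wd u) (wd v)) +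
      ∑ j ∈ (Finset.Ico 1 ((a : ℕ) + (b : ℕ))).attach,
        deltaCoeff F a b j.1 •
          consL (⟨(a : ℕ) + (b : ℕ) - j.1, by
              have := Finset.mem_Ico.mp j.2; omega⟩, α * β)
            (sh (wd [(⟨j.1, by have := Finset.mem_Ico.mp j.2; omega⟩, 1)])
              (sh (wd u) (wd v)))
  sh_cons : ∀ (a b : ℕ+) (α β : Fˣ) (u v : Word F),
    sh (wd ((a, α) :: u)) (wd ((b, β) :: v)) =
      consL (a, α) (sh (wd u) (wd ((b, β) :: v))) +
      consL (b, β) (sh (wd ((a, α) :: u)) (wd v)) +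
      dia (wd ((a, α) :: u)) (wd ((b, β) :: v))

/-- The horizontal map `φ_ε`. -/
def horiz (ε : Fˣ) : Dalg F →ₗ[F] Dalg F :=
  Finsupp.lmapDomain F F (fun w => match w with
    | [] => []
    | (u, δ) :: rest => (u, ε * δ) :: rest)

/-- The triangle product `▷` with a word as first argument. -/
def triW (S : ShuffleData F) : Word F → Dalg F → Dalg F
  | [], b => b
  | x :: u, b => consL x (S.sh (wd u) b)

/-- The triangle product `▷` on `𝔇` (the bilinear extension of `triW`). -/
def tri (S : ShuffleData F) (a b : Dalg F) : Dalg F :=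
  a.sum fun w c => c • triW S w b


abbrev Kinf (F : Type) [Field F] := LaurentSeries F

/-- The embedding `A = 𝔽_q[θ] → K_∞`, sending `θ` to `t⁻¹`. -/
def polyToK (F : Type) [Field F] : Polynomial F →+* Kinf F :=
  Polynomial.eval₂RingHom HahnSeries.C (HahnSeries.single (-1) 1)

/-- The monic polynomial of degree `d` with lower-order coefficients `c`. -/
def monicPoly (F : Type) [Field F] (d : ℕ) (c : Fin d → F) : Polynomial F :=
  Polynomial.X ^ d + ∑ i : Fin d, Polynomial.C (c i) * Polynomial.X ^ (i : ℕ)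

/-- The depth-one power sum `S_d(ε; s) = Σ_{a ∈ A_+, deg a = d} ε^{deg a}/a^s ∈ K_∞`. -/
def singleSum (F : Type) [Field F] [Fintype F] (ε : Fˣ) (s : ℕ) (d : ℕ) : Kinf F :=
  ∑ c : Fin d → F, ((ε : F) ^ d) • ((polyToK F (monicPoly F d c)) ^ s)⁻¹

/-- `S_{<d}` attached to a word, for `d ∈ ℕ`. -/
def SLtW (F : Type) [Field F] [Fintype F] : Word F → ℕ → Kinf F
  | [], _ => 1
  | (s, ε) :: rest, d => ∑ e ∈ Finset.range d, singleSum F ε (s : ℕ) e * SLtW F rest e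

/-- `S_d` attached to a (nonempty) word. -/
def SDW (F : Type) [Field F] [Fintype F] : Word F → ℕ → Kinf F
  | [], d => if d = 0 then 1 else 0
  | (s, ε) :: rest, d => singleSum F ε (s : ℕ) d * SLtW F rest d

/-- `S_{<d}` attached to a word, for `d ∈ ℤ`. -/
def SLtWZ (F : Type) [Field F] [Fintype F] : Word F → ℤ → Kinf F
  | [], _ => 1
  | w@(_ :: _), d => SLtW F w d.toNat

/-- The `𝔽_q`-linear map `S_{<d} : 𝔇 → K_∞`. -/
def SLtMap (F : Type) [Field F] [Fintype F] (d : ℤ) (v : Dalg F) : Kinf F :=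
  v.sum fun w c => c • SLtWZ F w d

/-- The AMZV attached to a word: `ζ_A = Σ_{d ≥ 0} S_d ∈ K_∞`. -/
def zetaW (F : Type) [Field F] [Fintype F] : Word F → Kinf F
  | [] => 1
  | w@(_ :: _) => ∑' d : ℕ, SDW F w d

/-- The `𝔽_q`-linear map `ζ_A : 𝔇 → K_∞`. -/
def zetaMap (F : Type) [Field F] [Fintype F] (v : Dalg F) : Kinf F :=
  v.sum fun w c => c • zetaW F w

open Finset

lemma pf_rec {K : Type*} [Field K] (x y : K) (hx : x ≠ 0) (hy : y ≠ 0) (hxy : x ≠ y)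
    (a b : ℕ) :
    (x ^ (a+1))⁻¹ * (y ^ (b+1))⁻¹ =
      (x - y)⁻¹ * ((x ^ a)⁻¹ * (y ^ (b+1))⁻¹ - (x ^ (a+1))⁻¹ * (y ^ b)⁻¹) := by
  have hu : x - y ≠ 0 := sub_ne_zero.mpr hxy
  have h : ((x ^ a)⁻¹ * (y ^ (b+1))⁻¹ - (x ^ (a+1))⁻¹ * (y ^ b)⁻¹) =
      (x - y) * ((x ^ (a+1))⁻¹ * (y ^ (b+1))⁻¹) := by
    field_simp
    ring
  rw [h, ← mul_assoc, inv_mul_cancel₀ hu, one_mul]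

lemma split_sum {K : Type*} [Field K] (v σ : K) (p m : ℕ) (X : ℕ → K) :
    ∑ k ∈ range (m+1), σ * (Nat.choose (p+k) k : K) * (X k * (v^(p+1+k))⁻¹)
    = ∑ k ∈ range (m+1), σ * (Nat.choose (p+k-1) k : K) * (X k * (v^(p+1+k))⁻¹)
      + ∑ k ∈ range m, σ * (Nat.choose (p+k) k : K) * (X (k+1) * (v^(p+2+k))⁻¹) := by
  have h2 : ∑ k ∈ range (m+1), (if k = 0 then 0 else
          σ * (Nat.choose (p+k-1) (k-1) : K) * (X k * (v^(p+1+k))⁻¹))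
      = ∑ k ∈ range m, σ * (Nat.choose (p+k) k : K) * (X (k+1) * (v^(p+2+k))⁻¹) := by
    rw [Finset.sum_range_succ']
    simp only [if_pos rfl, if_true, add_zero, if_neg (Nat.succ_ne_zero _), eq_self_iff_true]
    try rw [add_zero]
    apply Finset.sum_congr rfl
    intro k _
    have e1 : p + (k+1) - 1 = p + k := by omega
    have e2 : (k+1) - 1 = k := by omega
    have e3 : p + 1 + (k+1) = p + 2 + k := by omega
    rw [e1, e2, e3]
  rw [← h2, ← Finset.sum_add_distrib]
  apply Finset.sum_congr rfl
  intro k _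
  rcases k with _ | k
  · simp
  · rw [if_neg (Nat.succ_ne_zero _)]
    have e1 : p + (k+1) - 1 = p + k := by omega
    have e2 : (k+1) - 1 = k := by omega
    rw [e1, e2]
    rw [show p + (k+1) = (p+k)+1 from rfl, Nat.choose_succ_succ]
    push_cast
    ring

lemma inv_pow_succ {K : Type*} [Field K] (t : K) (n : ℕ) :
    (t^(n+1))⁻¹ = t⁻¹ * (t^n)⁻¹ := by
  rw [pow_succ, mul_inv_rev]

lemma pfG {K : Type*} [Field K] :
    ∀ (n : ℕ) (x y : K), x ≠ 0 → y ≠ 0 → x ≠ y → ∀ r s : ℕ, r + s = n → 0 < n →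
    (x ^ r)⁻¹ * (y ^ s)⁻¹ =
      (∑ k ∈ Finset.range r, ((-1 : K) ^ s * (Nat.choose (s + k - 1) k : K)) *
        ((x ^ (r - k))⁻¹ * ((x - y) ^ (s + k))⁻¹)) +
      (∑ k ∈ Finset.range s, ((-1 : K) ^ r * (Nat.choose (r + k - 1) k : K)) *
        ((y ^ (s - k))⁻¹ * ((y - x) ^ (r + k))⁻¹)) := by
  intro n
  induction n using Nat.strong_induction_on with
  | _ n IH =>
  intro x y hx hy hxy r s hrs hn
  match r, s with
  | 0, 0 => omega
  | 0, s+1 =>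
    rw [Finset.range_zero, Finset.sum_empty, zero_add, pow_zero, inv_one, one_mul]
    rw [Finset.sum_eq_single_of_mem 0 (by simp)]
    · simp
    · intro k _ hk
      have : Nat.choose (0 + k - 1) k = 0 := Nat.choose_eq_zero_of_lt (by omega)
      rw [this]
      push_cast
      ring
  | r+1, 0 =>
    rw [Finset.range_zero, Finset.sum_empty, add_zero, pow_zero, inv_one, mul_one]
    rw [Finset.sum_eq_single_of_mem 0 (by simp)]
    · simp
    · intro k _ hk
      have : Nat.choose (0 + k - 1) k = 0 := Nat.choose_eq_zero_of_lt (by omega)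
      rw [this]
      push_cast
      ring
  | a+1, b+1 =>
    have hu : x - y ≠ 0 := sub_ne_zero.mpr hxy
    have hw : y - x ≠ 0 := sub_ne_zero.mpr (Ne.symm hxy)
    have huw : (x - y)⁻¹ = -((y - x)⁻¹) := by
      rw [show x - y = -(y - x) by ring, inv_neg]
    have IH1 := IH (a + (b+1)) (by omega) x y hx hy hxy a (b+1) rfl (by omega)
    have IH2 := IH ((a+1) + b) (by omega) x y hx hy hxy (a+1) b rfl (by omega)
    rw [pf_rec x y hx hy hxy a b, IH1, IH2]
    have hA : (∑ k ∈ Finset.range (a+1), ((-1 : K) ^ (b+1) * (Nat.choose (b+1 + k - 1) k : K)) *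
          ((x ^ (a+1 - k))⁻¹ * ((x - y) ^ (b+1 + k))⁻¹))
        = (x-y)⁻¹ * (∑ k ∈ Finset.range a, ((-1 : K) ^ (b+1) * (Nat.choose (b+1 + k - 1) k : K)) *
            ((x ^ (a - k))⁻¹ * ((x - y) ^ (b+1 + k))⁻¹))
          - (x-y)⁻¹ * (∑ k ∈ Finset.range (a+1), ((-1 : K) ^ b * (Nat.choose (b + k - 1) k : K)) *
            ((x ^ (a+1 - k))⁻¹ * ((x - y) ^ (b + k))⁻¹)) := by
      have ecoef : ∀ k : ℕ, b+1+k-1 = b+k := fun k => by omega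
      simp only [ecoef]
      have hs := split_sum (x-y) ((-1 : K)^(b+1)) b a (fun k => (x^(a+1-k))⁻¹)
      rw [hs, Finset.mul_sum, Finset.mul_sum]
      have hg : ∀ k ∈ Finset.range a,
          (-1:K) ^ (b+1) * ((b + k).choose k : K) * ((x ^ (a + 1 - (k + 1)))⁻¹ * ((x - y) ^ (b + 2 + k))⁻¹)
          = (x - y)⁻¹ * ((-1:K) ^ (b+1) * ((b + k).choose k : K) * ((x ^ (a - k))⁻¹ * ((x - y) ^ (b + 1 + k))⁻¹)) := by
        intro k _
        rw [show b+2+k = (b+1+k)+1 from by omega, inv_pow_succ,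
          show a+1-(k+1) = a-k from by omega]
        ring
      have hf : ∀ k ∈ Finset.range (a+1),
          (-1:K) ^ (b+1) * ((b + k - 1).choose k : K) * ((x ^ (a + 1 - k))⁻¹ * ((x - y) ^ (b + 1 + k))⁻¹)
          = -((x - y)⁻¹ * ((-1:K) ^ b * ((b + k - 1).choose k : K) * ((x ^ (a + 1 - k))⁻¹ * ((x - y) ^ (b + k))⁻¹))) := by
        intro k _
        rw [show b+1+k = (b+k)+1 from by omega, inv_pow_succ, pow_succ]
        ring
      rw [Finset.sum_congr rfl hg, Finset.sum_congr rfl hf, Finset.sum_neg_distrib]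
      ring
    have hB : (∑ k ∈ Finset.range (b+1), ((-1 : K) ^ (a+1) * (Nat.choose (a+1 + k - 1) k : K)) *
          ((y ^ (b+1 - k))⁻¹ * ((y - x) ^ (a+1 + k))⁻¹))
        = (x-y)⁻¹ * (∑ k ∈ Finset.range (b+1), ((-1 : K) ^ a * (Nat.choose (a + k - 1) k : K)) *
            ((y ^ (b+1 - k))⁻¹ * ((y - x) ^ (a + k))⁻¹))
          - (x-y)⁻¹ * (∑ k ∈ Finset.range b, ((-1 : K) ^ (a+1) * (Nat.choose (a+1 + k - 1) k : K)) *
            ((y ^ (b - k))⁻¹ * ((y - x) ^ (a+1 + k))⁻¹)) := by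
      have ecoef : ∀ k : ℕ, a+1+k-1 = a+k := fun k => by omega
      simp only [ecoef]
      have hs := split_sum (y-x) ((-1 : K)^(a+1)) a b (fun k => (y^(b+1-k))⁻¹)
      rw [hs, Finset.mul_sum, Finset.mul_sum]
      have hg : ∀ k ∈ Finset.range (b+1),
          (-1:K) ^ (a+1) * ((a + k - 1).choose k : K) * ((y ^ (b + 1 - k))⁻¹ * ((y - x) ^ (a + 1 + k))⁻¹)
          = (x - y)⁻¹ * ((-1:K) ^ a * ((a + k - 1).choose k : K) * ((y ^ (b + 1 - k))⁻¹ * ((y - x) ^ (a + k))⁻¹)) := by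
        intro k _
        rw [show a+1+k = (a+k)+1 from by omega, inv_pow_succ, huw, pow_succ]
        ring
      have hf : ∀ k ∈ Finset.range b,
          (-1:K) ^ (a+1) * ((a + k).choose k : K) * ((y ^ (b + 1 - (k + 1)))⁻¹ * ((y - x) ^ (a + 2 + k))⁻¹)
          = -((x - y)⁻¹ * ((-1:K) ^ (a+1) * ((a + k).choose k : K) * ((y ^ (b - k))⁻¹ * ((y - x) ^ (a + 1 + k))⁻¹))) := by
        intro k _
        rw [show a+2+k = (a+1+k)+1 from by omega, inv_pow_succ,
          show b+1-(k+1) = b-k from by omega, huw]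
        ring
      rw [Finset.sum_congr rfl hg, Finset.sum_congr rfl hf, Finset.sum_neg_distrib]
      ring
    rw [hA, hB]
    ring



/-- coefficient of a polynomial image -/
lemma polyToK_coeff (p : Polynomial F) (n : ℕ) :
    (polyToK F p).coeff (-(n : ℤ)) = p.coeff n := by
  have key : polyToK F p = ∑ i ∈ Finset.range (p.natDegree + 1),
      HahnSeries.single (-(i : ℤ)) (p.coeff i) := by
    show Polynomial.eval₂ _ _ p = _
    rw [Polynomial.eval₂_eq_sum_range]
    apply Finset.sum_congr rfl
    intro i _
    rw [HahnSeries.single_pow]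
    rw [show ((i : ℕ) • (-1 : ℤ)) = -(i:ℤ) by simp, one_pow]
    rw [show (HahnSeries.C (p.coeff i) : Kinf F) = HahnSeries.single (0:ℤ) (p.coeff i) from rfl,
      HahnSeries.single_mul_single, zero_add, mul_one]
  rw [key]
  rw [show ((∑ i ∈ Finset.range (p.natDegree + 1),
      HahnSeries.single (-(i : ℤ)) (p.coeff i)).coeff (-(n:ℤ)))
    = ((HahnSeries.coeff.addMonoidHom (R := F) (-(n:ℤ)))
        (∑ i ∈ Finset.range (p.natDegree + 1),
          HahnSeries.single (-(i : ℤ)) (p.coeff i))) from rfl, map_sum]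
  by_cases hn : n ≤ p.natDegree
  · rw [Finset.sum_eq_single_of_mem n (Finset.mem_range.mpr (by omega))]
    · show (HahnSeries.single (-(n:ℤ)) (p.coeff n)).coeff (-(n:ℤ)) = _
      rw [HahnSeries.coeff_single_same]
    · intro i _ hi
      show (HahnSeries.single (-(i:ℤ)) (p.coeff i)).coeff (-(n:ℤ)) = 0
      rw [HahnSeries.coeff_single_of_ne (by simpa using fun h => hi (by exact_mod_cast h.symm))]
  · rw [Finset.sum_eq_zero, eq_comm]
    · exact Polynomial.coeff_eq_zero_of_natDegree_lt (by omega)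
    · intro i hi
      show (HahnSeries.single (-(i:ℤ)) (p.coeff i)).coeff (-(n:ℤ)) = 0
      apply HahnSeries.coeff_single_of_ne
      have : i ≠ n := by simp at hi; omega
      simpa using fun h => this (by exact_mod_cast h.symm)

lemma polyToK_injective : Function.Injective (polyToK F) := by
  intro p q h
  ext n
  rw [← polyToK_coeff p n, ← polyToK_coeff q n, h]

def Ppoly (d : ℕ) (e : Fin d → F) : Polynomial F :=
  ∑ i : Fin d, Polynomial.C (e i) * Polynomial.X ^ (i : ℕ)

lemma sumCX_coeff (d : ℕ) (e : Fin d → F) (k : ℕ) :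
    (∑ i : Fin d, Polynomial.C (e i) * Polynomial.X ^ (i : ℕ)).coeff k
    = if h : k < d then e ⟨k, h⟩ else 0 := by
  rw [Polynomial.finset_sum_coeff]
  by_cases h : k < d
  · rw [dif_pos h, Finset.sum_eq_single_of_mem ⟨k, h⟩ (Finset.mem_univ _)]
    · simp [Polynomial.coeff_C_mul, Polynomial.coeff_X_pow]
    · intro i _ hi
      rw [Polynomial.coeff_C_mul, Polynomial.coeff_X_pow, if_neg, mul_zero]
      intro hk
      exact hi (Fin.ext hk.symm)
  · rw [dif_neg h, Finset.sum_eq_zero]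
    intro i _
    rw [Polynomial.coeff_C_mul, Polynomial.coeff_X_pow, if_neg, mul_zero]
    intro hk
    exact h (hk ▸ i.isLt)

lemma Ppoly_coeff (d : ℕ) (e : Fin d → F) (k : ℕ) :
    (Ppoly d e).coeff k = if h : k < d then e ⟨k, h⟩ else 0 :=
  sumCX_coeff d e k

lemma monicPoly_coeff (d : ℕ) (c : Fin d → F) (k : ℕ) :
    (monicPoly F d c).coeff k
      = (if k = d then 1 else 0) + (if h : k < d then c ⟨k, h⟩ else 0) := by
  rw [monicPoly, Polynomial.coeff_add, Polynomial.coeff_X_pow, sumCX_coeff]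

lemma monicPoly_sub (d : ℕ) (c c' : Fin d → F) :
    monicPoly F d c - monicPoly F d c' = Ppoly d (c - c') := by
  rw [monicPoly, monicPoly, add_sub_add_left_eq_sub, Ppoly, ← Finset.sum_sub_distrib]
  apply Finset.sum_congr rfl
  intro i _
  rw [← sub_mul, ← map_sub]
  rfl

lemma Ppoly_ne_zero {d : ℕ} {e : Fin d → F} (he : e ≠ 0) : Ppoly d e ≠ 0 := by
  intro h
  apply he
  funext i
  have := Ppoly_coeff d e i
  rw [h, Polynomial.coeff_zero, dif_pos i.isLt] at this
  simpa using this.symm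

lemma monicPoly_ne (d : ℕ) {c c' : Fin d → F} (h : c ≠ c') :
    monicPoly F d c ≠ monicPoly F d c' := by
  intro he
  apply Ppoly_ne_zero (d := d) (e := c - c') (sub_ne_zero.mpr h)
  rw [← monicPoly_sub, he, sub_self]

lemma monicPoly_ne_zero (d : ℕ) (c : Fin d → F) : monicPoly F d c ≠ 0 := by
  intro h
  have := monicPoly_coeff d c d
  rw [h, Polynomial.coeff_zero, if_pos rfl, dif_neg (lt_irrefl d)] at this
  simpa using this.symm

lemma polyToK_ne_zero {p : Polynomial F} (hp : p ≠ 0) : polyToK F p ≠ 0 := by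
  intro h
  exact hp (polyToK_injective (by rw [h, map_zero]))

lemma Ppoly_snoc_zero (d : ℕ) (c : Fin d → F) :
    Ppoly (d+1) (Fin.snoc c (0:F)) = Ppoly d c := by
  rw [Ppoly, Ppoly, Fin.sum_univ_castSucc]
  simp [Fin.snoc_castSucc, Fin.snoc_last]

lemma Ppoly_snoc_unit (d : ℕ) (c : Fin d → F) (t : F) :
    Ppoly (d+1) (Fin.snoc (t • c) t) = Polynomial.C t * monicPoly F d c := by
  rw [Ppoly, monicPoly, Fin.sum_univ_castSucc]
  simp only [Fin.snoc_castSucc, Fin.snoc_last, Fin.coe_castSucc, Fin.val_last,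
    Pi.smul_apply, smul_eq_mul, map_mul, mul_add, Finset.mul_sum]
  rw [add_comm]
  congr 1
  apply Finset.sum_congr rfl
  intro i _
  ring

open scoped Classical

lemma units_sum (j : ℕ) :
    ∑ t ∈ (Finset.univ : Finset F).erase 0, ((t ^ j)⁻¹ : F)
      = if (Fintype.card F - 1) ∣ j then (-1 : F) else 0 := by
  letI := Classical.decEq F
  have h1 : ∑ t ∈ (Finset.univ : Finset F).erase 0, ((t ^ j)⁻¹ : F)
      = ∑ u : Fˣ, (((u : F)) ^ j)⁻¹ := by
    exact Finset.sum_bij' (fun t ht => Units.mk0 t (Finset.mem_erase.mp ht).1)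
      (fun u _ => (u : F))
      (fun a ha => Finset.mem_univ _)
      (fun u _ => Finset.mem_erase.mpr ⟨Units.ne_zero u, Finset.mem_univ _⟩)
      (fun a ha => rfl)
      (fun u _ => Units.ext rfl)
      (fun a ha => rfl)
  rw [h1]
  have h2 : ∀ u : Fˣ, (((u : F)) ^ j)⁻¹ = ((u⁻¹ : Fˣ) : F) ^ j := by
    intro u
    rw [Units.val_inv_eq_inv_val, inv_pow]
  simp only [h2]
  rw [Fintype.sum_bijective (·⁻¹) inv_involutive.bijective _
    (fun u : Fˣ => ((u : F)) ^ j) (fun x => rfl)]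
  exact FiniteField.sum_pow_units F j

lemma Ct_pull (t : F) (z : Polynomial F) (j : ℕ) :
    ((polyToK F (Polynomial.C t * z)) ^ j)⁻¹ = (t ^ j)⁻¹ • ((polyToK F z) ^ j)⁻¹ := by
  have h1 : polyToK F (Polynomial.C t) = HahnSeries.C t := by
    show Polynomial.eval₂ _ _ _ = _
    rw [Polynomial.eval₂_C]
  calc ((polyToK F (Polynomial.C t * z)) ^ j)⁻¹
      = ((HahnSeries.C t) ^ j * (polyToK F z) ^ j)⁻¹ := by rw [map_mul, h1, mul_pow]
    _ = ((polyToK F z) ^ j)⁻¹ * ((HahnSeries.C (t ^ j) : Kinf F))⁻¹ := by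
        rw [mul_inv_rev, map_pow]
    _ = ((polyToK F z) ^ j)⁻¹ * (HahnSeries.C ((t ^ j)⁻¹) : Kinf F) := by
        rw [map_inv₀]
    _ = (t ^ j)⁻¹ • ((polyToK F z) ^ j)⁻¹ := by
        rw [mul_comm, HahnSeries.C_mul_eq_smul]

lemma Tsum (j : ℕ) : ∀ d : ℕ,
    ∑ e : Fin d → F, (if e = 0 then 0 else ((polyToK F (Ppoly d e)) ^ j)⁻¹)
    = (if (Fintype.card F - 1) ∣ j then (-1 : F) else 0) •
        ∑ t ∈ Finset.range d, ∑ c : Fin t → F, ((polyToK F (monicPoly F t c)) ^ j)⁻¹ := by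
  intro d
  induction d with
  | zero =>
    rw [Finset.range_zero, Finset.sum_empty, smul_zero]
    apply Finset.sum_eq_zero
    intro e _
    rw [if_pos (Subsingleton.elim _ _)]
  | succ d IH =>
    have hsnoc0 : ∀ c : Fin d → F, ((Fin.snoc c (0:F) : Fin (d+1) → F) = 0) ↔ c = 0 := by
      intro c
      constructor
      · intro h
        funext i
        have := congrFun h (Fin.castSucc i)
        simpa [Fin.snoc_castSucc] using this
      · intro h
        subst h
        funext i
        induction i using Fin.lastCases with
        | last => simp
        | cast i => simp
    have hsplit : (∑ e : Fin (d+1) → F,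
        (if e = 0 then 0 else ((polyToK F (Ppoly (d+1) e)) ^ j)⁻¹))
        = ∑ t : F, ∑ c : Fin d → F,
          (if (Fin.snoc c t : Fin (d+1) → F) = 0 then 0 else ((polyToK F (Ppoly (d+1) (Fin.snoc c t))) ^ j)⁻¹) := by
      rw [← Equiv.sum_comp (Fin.snocEquiv (fun _ : Fin (d+1) => F))
        (fun e => if e = 0 then 0 else ((polyToK F (Ppoly (d+1) e)) ^ j)⁻¹),
        Fintype.sum_prod_type]
      rfl
    rw [hsplit, ← Finset.add_sum_erase _ _ (Finset.mem_univ (0 : F))]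
    have hzero : ∑ c : Fin d → F,
        (if (Fin.snoc c (0:F) : Fin (d+1) → F) = 0 then 0 else ((polyToK F (Ppoly (d+1) (Fin.snoc c 0))) ^ j)⁻¹)
        = ∑ c : Fin d → F, (if c = 0 then 0 else ((polyToK F (Ppoly d c)) ^ j)⁻¹) := by
      apply Finset.sum_congr rfl
      intro c _
      rw [Ppoly_snoc_zero]
      by_cases h : c = 0
      · rw [if_pos ((hsnoc0 c).mpr h), if_pos h]
      · rw [if_neg (fun hh => h ((hsnoc0 c).mp hh)), if_neg h]
    have hunit : ∀ t ∈ (Finset.univ : Finset F).erase 0,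
        (∑ c : Fin d → F,
          (if (Fin.snoc c t : Fin (d+1) → F) = 0 then 0 else ((polyToK F (Ppoly (d+1) (Fin.snoc c t))) ^ j)⁻¹))
        = ((t ^ j)⁻¹ : F) • ∑ c : Fin d → F, ((polyToK F (monicPoly F d c)) ^ j)⁻¹ := by
      intro t ht
      have ht0 : t ≠ 0 := (Finset.mem_erase.mp ht).1
      have hne : ∀ c : Fin d → F, (Fin.snoc c t : Fin (d+1) → F) ≠ 0 := by
        intro c h
        exact ht0 (by simpa using congrFun h (Fin.last d))
      have step1 : ∑ c : Fin d → F,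
          (if (Fin.snoc c t : Fin (d+1) → F) = 0 then 0 else ((polyToK F (Ppoly (d+1) (Fin.snoc c t))) ^ j)⁻¹)
          = ∑ c : Fin d → F, ((polyToK F (Ppoly (d+1) (Fin.snoc c t))) ^ j)⁻¹ :=
        Finset.sum_congr rfl (fun c _ => if_neg (hne c))
      rw [step1]
      have u : Fˣ := Units.mk0 t ht0
      rw [← Equiv.sum_comp (MulAction.toPerm (Units.mk0 t ht0))
        (fun c : Fin d → F => ((polyToK F (Ppoly (d+1) (Fin.snoc c t))) ^ j)⁻¹),
        Finset.smul_sum]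
      apply Finset.sum_congr rfl
      intro c _
      have hsmul : (MulAction.toPerm (Units.mk0 t ht0)) c = t • c := rfl
      rw [hsmul, Ppoly_snoc_unit, Ct_pull]
    rw [hzero, IH, Finset.sum_congr rfl hunit, ← Finset.sum_smul, units_sum,
      Finset.sum_range_succ, smul_add]

def Usum (F : Type) [Field F] [Fintype F] (d i : ℕ) : Kinf F :=
  ∑ c : Fin d → F, ((polyToK F (monicPoly F d c)) ^ i)⁻¹

def Vsum (F : Type) [Field F] [Fintype F] (d j : ℕ) : Kinf F :=
  ∑ t ∈ Finset.range d, ∑ c : Fin t → F, ((polyToK F (monicPoly F t c)) ^ j)⁻¹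

lemma Tsum_erase (j d : ℕ) :
    ∑ e ∈ (Finset.univ : Finset (Fin d → F)).erase 0, ((polyToK F (Ppoly d e)) ^ j)⁻¹
    = (if (Fintype.card F - 1) ∣ j then (-1 : F) else 0) • Vsum F d j := by
  have h : ∑ e : Fin d → F, (if e = 0 then 0 else ((polyToK F (Ppoly d e)) ^ j)⁻¹)
      = ∑ e ∈ (Finset.univ : Finset (Fin d → F)).erase 0, ((polyToK F (Ppoly d e)) ^ j)⁻¹ := by
    rw [← Finset.add_sum_erase _ _ (Finset.mem_univ (0 : Fin d → F)), if_pos rfl, zero_add]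
    exact Finset.sum_congr rfl fun e he => if_neg (Finset.mem_erase.mp he).1
  rw [← h, Tsum]
  rfl

lemma erase_sub_sum (d : ℕ) (c : Fin d → F) (g : Kinf F → Kinf F) :
    ∑ c' ∈ (Finset.univ : Finset (Fin d → F)).erase c,
      g (polyToK F (monicPoly F d c) - polyToK F (monicPoly F d c'))
    = ∑ e ∈ (Finset.univ : Finset (Fin d → F)).erase 0, g (polyToK F (Ppoly d e)) := by
  have hdiff : ∀ c' : Fin d → F, polyToK F (monicPoly F d c) - polyToK F (monicPoly F d c')
      = polyToK F (Ppoly d (c - c')) := fun c' => by rw [← map_sub, monicPoly_sub]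
  exact Finset.sum_bij' (fun c' _ => c - c') (fun e _ => c - e)
    (fun a ha => Finset.mem_erase.mpr
      ⟨sub_ne_zero.mpr (Ne.symm (Finset.mem_erase.mp ha).1), Finset.mem_univ _⟩)
    (fun e he => Finset.mem_erase.mpr
      ⟨fun h => (Finset.mem_erase.mp he).1 (by
          have := sub_eq_self.mp h
          exact this), Finset.mem_univ _⟩)
    (fun a ha => sub_sub_cancel c a)
    (fun e he => sub_sub_cancel c e)
    (fun a ha => by rw [hdiff a])

lemma smul_assemble (b t : F) (U V : Kinf F) :
    (HahnSeries.C b : Kinf F) * (U * (t • V)) = (t * b) • (U * V) := by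
  rw [← HahnSeries.C_mul_eq_smul, ← HahnSeries.C_mul_eq_smul, map_mul]
  ring

lemma intCast_C (m : ℤ) : (HahnSeries.C ((m : F)) : Kinf F) = (m : Kinf F) :=
  map_intCast _ m

lemma half_coeff (s j : ℕ) (k : ℕ) (hs : 1 ≤ s) (hj : j = s + k) :
    (if (Fintype.card F - 1) ∣ j then (-1:F) else 0) * ((((-1)^s * (Nat.choose (s+k-1) k) : ℤ)) : F)
      = (if (Fintype.card F - 1) ∣ j then
          ((((-1)^(s-1) * (Nat.choose (j-1) (s-1)) : ℤ)) : F) else 0) := by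
  subst hj
  have hcs : Nat.choose (s+k-1) k = Nat.choose (s+k-1) (s-1) := by
    rw [← Nat.choose_symm (show k ≤ s+k-1 by omega), show s+k-1-k = s-1 by omega]
  have hsgn : ((-1:ℤ))^s = -(-1:ℤ)^(s-1) := by
    conv_lhs => rw [show s = (s-1)+1 by omega]
    rw [pow_succ]
    ring
  by_cases hdvd : (Fintype.card F - 1) ∣ (s + k)
  · rw [if_pos hdvd, if_pos hdvd, hcs, hsgn, show s+k-1 = s+k-1 from rfl]
    push_cast
    ring
  · rw [if_neg hdvd, if_neg hdvd, zero_mul]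

lemma partGen (d a b : ℕ) (ha : 1 ≤ a) (hb : 1 ≤ b) :
    ∑ c : Fin d → F, ∑ c' ∈ Finset.univ.erase c, ∑ k ∈ Finset.range a,
      ((-1 : Kinf F) ^ b * (Nat.choose (b + k - 1) k : Kinf F)) *
      (((polyToK F (monicPoly F d c)) ^ (a - k))⁻¹ *
        ((polyToK F (monicPoly F d c) - polyToK F (monicPoly F d c')) ^ (b + k))⁻¹)
    = ∑ j ∈ Finset.Ico 1 (a+b),
        (if (Fintype.card F - 1) ∣ j then
          ((((-1)^(b-1) * (Nat.choose (j-1) (b-1)) : ℤ)) : F) else 0)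
        • (Usum F d (a+b-j) * Vsum F d j) := by
  have inner : ∀ k ∈ Finset.range a,
      (∑ c : Fin d → F, ∑ c' ∈ Finset.univ.erase c,
        ((-1 : Kinf F) ^ b * (Nat.choose (b + k - 1) k : Kinf F)) *
        (((polyToK F (monicPoly F d c)) ^ (a - k))⁻¹ *
          ((polyToK F (monicPoly F d c) - polyToK F (monicPoly F d c')) ^ (b + k))⁻¹))
      = (if (Fintype.card F - 1) ∣ (b+k) then
          ((((-1)^(b-1) * (Nat.choose (b+k-1) (b-1)) : ℤ)) : F) else 0)
        • (Usum F d (a-k) * Vsum F d (b+k)) := by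
    intro k hk
    have hterase : ∀ c : Fin d → F,
        ∑ c' ∈ Finset.univ.erase c,
          ((polyToK F (monicPoly F d c) - polyToK F (monicPoly F d c')) ^ (b + k))⁻¹
        = (if (Fintype.card F - 1) ∣ (b+k) then (-1 : F) else 0) • Vsum F d (b+k) := by
      intro c
      have h1 := erase_sub_sum d c (fun z => (z ^ (b+k))⁻¹)
      rw [h1, Tsum_erase]
    have hc : ∀ c : Fin d → F,
        (∑ c' ∈ Finset.univ.erase c,
          ((-1 : Kinf F) ^ b * (Nat.choose (b + k - 1) k : Kinf F)) *
          (((polyToK F (monicPoly F d c)) ^ (a - k))⁻¹ *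
            ((polyToK F (monicPoly F d c) - polyToK F (monicPoly F d c')) ^ (b + k))⁻¹))
        = ((-1 : Kinf F) ^ b * (Nat.choose (b + k - 1) k : Kinf F)) *
          (((polyToK F (monicPoly F d c)) ^ (a - k))⁻¹ *
            ((if (Fintype.card F - 1) ∣ (b+k) then (-1 : F) else 0) • Vsum F d (b+k))) := by
      intro c
      rw [← Finset.mul_sum, ← Finset.mul_sum, hterase c]
    rw [Finset.sum_congr rfl (fun c _ => hc c), ← Finset.mul_sum, ← Finset.sum_mul]
    have hcast : ((-1 : Kinf F) ^ b * ((Nat.choose (b+k-1) k : ℕ) : Kinf F))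
        = HahnSeries.C (((((-1)^b * (Nat.choose (b+k-1) k) : ℤ))) : F) := by
      rw [intCast_C]
      push_cast
      ring
    rw [hcast, smul_assemble, half_coeff b (b+k) k hb rfl]
    rfl
  calc ∑ c : Fin d → F, ∑ c' ∈ Finset.univ.erase c, ∑ k ∈ Finset.range a,
      ((-1 : Kinf F) ^ b * (Nat.choose (b + k - 1) k : Kinf F)) *
      (((polyToK F (monicPoly F d c)) ^ (a - k))⁻¹ *
        ((polyToK F (monicPoly F d c) - polyToK F (monicPoly F d c')) ^ (b + k))⁻¹)
      = ∑ c : Fin d → F, ∑ k ∈ Finset.range a, ∑ c' ∈ Finset.univ.erase c,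
        ((-1 : Kinf F) ^ b * (Nat.choose (b + k - 1) k : Kinf F)) *
        (((polyToK F (monicPoly F d c)) ^ (a - k))⁻¹ *
          ((polyToK F (monicPoly F d c) - polyToK F (monicPoly F d c')) ^ (b + k))⁻¹) :=
        Finset.sum_congr rfl (fun c _ => Finset.sum_comm)
    _ = ∑ k ∈ Finset.range a, ∑ c : Fin d → F, ∑ c' ∈ Finset.univ.erase c,
        ((-1 : Kinf F) ^ b * (Nat.choose (b + k - 1) k : Kinf F)) *
        (((polyToK F (monicPoly F d c)) ^ (a - k))⁻¹ *
          ((polyToK F (monicPoly F d c) - polyToK F (monicPoly F d c')) ^ (b + k))⁻¹) :=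
        Finset.sum_comm
    _ = ∑ k ∈ Finset.range a,
        (if (Fintype.card F - 1) ∣ (b+k) then
          ((((-1)^(b-1) * (Nat.choose (b+k-1) (b-1)) : ℤ)) : F) else 0)
        • (Usum F d (a-k) * Vsum F d (b+k)) := Finset.sum_congr rfl inner
    _ = ∑ j ∈ Finset.Ico b (a+b),
        (if (Fintype.card F - 1) ∣ j then
          ((((-1)^(b-1) * (Nat.choose (j-1) (b-1)) : ℤ)) : F) else 0)
        • (Usum F d (a+b-j) * Vsum F d j) := by
        rw [Finset.sum_Ico_eq_sum_range, show a+b-b = a from by omega]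
        apply Finset.sum_congr rfl
        intro k hk
        have e1 : a + b - (b + k) = a - k := by omega
        rw [e1]
    _ = ∑ j ∈ Finset.Ico 1 (a+b),
        (if (Fintype.card F - 1) ∣ j then
          ((((-1)^(b-1) * (Nat.choose (j-1) (b-1)) : ℤ)) : F) else 0)
        • (Usum F d (a+b-j) * Vsum F d j) := by
        apply Finset.sum_subset
        · intro j hj
          rw [Finset.mem_Ico] at hj ⊢
          omega
        · intro j hj hj'
          rw [Finset.mem_Ico] at hj hj'
          have hjb : j < b := by omega
          have : Nat.choose (j-1) (b-1) = 0 := Nat.choose_eq_zero_of_lt (by omega)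
          rw [this]
          simp

lemma core (d r s : ℕ) (hr : 1 ≤ r) (hs : 1 ≤ s) :
    ∑ c : Fin d → F, ∑ c' : Fin d → F,
      ((polyToK F (monicPoly F d c)) ^ r)⁻¹ * ((polyToK F (monicPoly F d c')) ^ s)⁻¹
    = Usum F d (r+s) + ∑ j ∈ Finset.Ico 1 (r+s),
        deltaCoeff F r s j • (Usum F d (r+s-j) * Vsum F d j) := by
  have hMne : ∀ t (c : Fin t → F), polyToK F (monicPoly F t c) ≠ 0 :=
    fun t c => polyToK_ne_zero (monicPoly_ne_zero t c)
  have hMneq : ∀ {c c' : Fin d → F}, c' ≠ c →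
      polyToK F (monicPoly F d c) ≠ polyToK F (monicPoly F d c') :=
    fun {c c'} h hc => (monicPoly_ne d (Ne.symm h)) (polyToK_injective hc)
  -- step 1 : diagonal split
  have step1 : ∑ c : Fin d → F, ∑ c' : Fin d → F,
      ((polyToK F (monicPoly F d c)) ^ r)⁻¹ * ((polyToK F (monicPoly F d c')) ^ s)⁻¹
      = Usum F d (r+s)
      + ∑ c : Fin d → F, ∑ c' ∈ Finset.univ.erase c,
          ((polyToK F (monicPoly F d c)) ^ r)⁻¹ * ((polyToK F (monicPoly F d c')) ^ s)⁻¹ := by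
    rw [Usum, ← Finset.sum_add_distrib]
    apply Finset.sum_congr rfl
    intro c _
    rw [← Finset.add_sum_erase _ _ (Finset.mem_univ c), ← mul_inv, ← pow_add]
  rw [step1]
  congr 1
  -- off-diagonal: apply partial fractions
  have step2 : ∑ c : Fin d → F, ∑ c' ∈ Finset.univ.erase c,
      ((polyToK F (monicPoly F d c)) ^ r)⁻¹ * ((polyToK F (monicPoly F d c')) ^ s)⁻¹
      = (∑ c : Fin d → F, ∑ c' ∈ Finset.univ.erase c, ∑ k ∈ Finset.range r,
          ((-1 : Kinf F) ^ s * (Nat.choose (s + k - 1) k : Kinf F)) *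
          (((polyToK F (monicPoly F d c)) ^ (r - k))⁻¹ *
            ((polyToK F (monicPoly F d c) - polyToK F (monicPoly F d c')) ^ (s + k))⁻¹))
      + (∑ c : Fin d → F, ∑ c' ∈ Finset.univ.erase c, ∑ k ∈ Finset.range s,
          ((-1 : Kinf F) ^ r * (Nat.choose (r + k - 1) k : Kinf F)) *
          (((polyToK F (monicPoly F d c')) ^ (s - k))⁻¹ *
            ((polyToK F (monicPoly F d c') - polyToK F (monicPoly F d c)) ^ (r + k))⁻¹)) := by
    rw [← Finset.sum_add_distrib]
    apply Finset.sum_congr rfl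
    intro c _
    rw [← Finset.sum_add_distrib]
    apply Finset.sum_congr rfl
    intro c' hc'
    exact pfG (r+s) _ _ (hMne d c) (hMne d c') (hMneq (Finset.mem_erase.mp hc').1)
      r s rfl (by omega)
  rw [step2]
  have swapB : ∑ c : Fin d → F, ∑ c' ∈ Finset.univ.erase c, ∑ k ∈ Finset.range s,
      ((-1 : Kinf F) ^ r * (Nat.choose (r + k - 1) k : Kinf F)) *
      (((polyToK F (monicPoly F d c')) ^ (s - k))⁻¹ *
        ((polyToK F (monicPoly F d c') - polyToK F (monicPoly F d c)) ^ (r + k))⁻¹)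
      = ∑ c' : Fin d → F, ∑ c ∈ Finset.univ.erase c', ∑ k ∈ Finset.range s,
      ((-1 : Kinf F) ^ r * (Nat.choose (r + k - 1) k : Kinf F)) *
      (((polyToK F (monicPoly F d c')) ^ (s - k))⁻¹ *
        ((polyToK F (monicPoly F d c') - polyToK F (monicPoly F d c)) ^ (r + k))⁻¹) := by
    apply Finset.sum_comm'
    intro x y
    simp only [Finset.mem_univ, Finset.mem_erase, true_and, and_true]
    exact ⟨fun h => Ne.symm h, fun h => Ne.symm h⟩
  rw [swapB, partGen d r s hr hs, partGen d s r hs hr,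
    show s + r = r + s from Nat.add_comm s r, ← Finset.sum_add_distrib]
  apply Finset.sum_congr rfl
  intro j hj
  rw [← add_smul]
  congr 1
  rw [deltaCoeff]
  by_cases hdvd : (Fintype.card F - 1) ∣ j
  · rw [if_pos hdvd, if_pos hdvd, if_pos hdvd]
    push_cast
    ring
  · rw [if_neg hdvd, if_neg hdvd, if_neg hdvd, add_zero]

lemma smul_mul_smul' (a b : F) (x y : Kinf F) : (a • x) * (b • y) = (a * b) • (x * y) := by
  rw [← HahnSeries.C_mul_eq_smul, ← HahnSeries.C_mul_eq_smul, ← HahnSeries.C_mul_eq_smul, map_mul]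
  ring

lemma smul_mul_assoc' (a : F) (x y : Kinf F) : (a • x) * y = a • (x * y) := by
  rw [← HahnSeries.C_mul_eq_smul, ← HahnSeries.C_mul_eq_smul, mul_assoc]

lemma smul_comm' (a b : F) (x : Kinf F) : a • (b • x) = b • (a • x) := by
  rw [← HahnSeries.C_mul_eq_smul, ← HahnSeries.C_mul_eq_smul, ← HahnSeries.C_mul_eq_smul,
    ← HahnSeries.C_mul_eq_smul, ← mul_assoc, ← mul_assoc, mul_comm (HahnSeries.C a)]

lemma singleSum_eq (ε : Fˣ) (m e : ℕ) :
    singleSum F ε m e = ((ε : F) ^ e) • Usum F e m := by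
  rw [singleSum, Usum, Finset.smul_sum]

lemma SLtW_eq (j : ℕ) (hj : 0 < j) (e : ℕ) :
    SLtW F [((⟨j, hj⟩ : ℕ+), (1 : Fˣ))] e = Vsum F e j := by
  erw [SLtW, Vsum]
  apply Finset.sum_congr rfl
  intro t _
  rw [SLtW, mul_one, singleSum]
  apply Finset.sum_congr rfl
  intro c _
  rw [Units.val_one, one_pow, one_smul]
  rfl


/-- Chen's formula for twisted power sums (Lemma `VMPLdepth1`). -/
theorem power_sum_depth_one_product (F : Type) [Field F] [Fintype F]
    (α β : Fˣ) (r s : ℕ+) (d : ℕ) :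
    SDW F [(r, α)] d * SDW F [(s, β)] d =
      SDW F [(r + s, α * β)] d +
      ∑ j ∈ (Finset.Ico 1 ((r : ℕ) + (s : ℕ))).attach,
        deltaCoeff F r s j.1 •
          SDW F [(⟨(r : ℕ) + (s : ℕ) - j.1, by
              have := Finset.mem_Ico.mp j.2; omega⟩, α * β),
            (⟨j.1, by have := Finset.mem_Ico.mp j.2; omega⟩, 1)] d := by
  have hr : 1 ≤ (r : ℕ) := r.2
  have hs : 1 ≤ (s : ℕ) := s.2
  set γ : F := ((α : F)) ^ d * ((β : F)) ^ d with hγ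
  have hL : SDW F [(r, α)] d * SDW F [(s, β)] d
      = γ • (∑ c : Fin d → F, ∑ c' : Fin d → F,
          ((polyToK F (monicPoly F d c)) ^ (r : ℕ))⁻¹ *
          ((polyToK F (monicPoly F d c')) ^ (s : ℕ))⁻¹) := by
    rw [SDW, SDW, SLtW, mul_one, mul_one, singleSum_eq, singleSum_eq,
      smul_mul_smul', Usum, Usum, Finset.sum_mul_sum]
  have hR1 : SDW F [(r + s, α * β)] d = γ • Usum F d ((r : ℕ) + (s : ℕ)) := by
    rw [SDW, SLtW, mul_one, PNat.add_coe, singleSum_eq, Units.val_mul, mul_pow]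
  have hR2 : ∑ j ∈ (Finset.Ico 1 ((r : ℕ) + (s : ℕ))).attach,
        deltaCoeff F r s j.1 •
          SDW F [(⟨(r : ℕ) + (s : ℕ) - j.1, by
              have := Finset.mem_Ico.mp j.2; omega⟩, α * β),
            (⟨j.1, by have := Finset.mem_Ico.mp j.2; omega⟩, 1)] d
      = γ • ∑ j ∈ Finset.Ico 1 ((r : ℕ) + (s : ℕ)),
          deltaCoeff F r s j • (Usum F d ((r : ℕ) + (s : ℕ) - j) * Vsum F d j) := by
    rw [Finset.smul_sum,
      ← Finset.sum_attach (Finset.Ico 1 ((r : ℕ) + (s : ℕ)))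
        (fun j => γ • (deltaCoeff F r s j • (Usum F d ((r : ℕ) + (s : ℕ) - j) * Vsum F d j)))]
    apply Finset.sum_congr rfl
    intro j _
    have hmem := Finset.mem_Ico.mp j.2
    erw [SDW, SLtW_eq j.1 (by omega), singleSum_eq, Units.val_mul, mul_pow, ← hγ,
      smul_mul_assoc', smul_comm']
    rfl
  rw [hL, hR1, hR2, ← smul_add]
  congr 1
  exact core d (r : ℕ) (s : ℕ) hr hs


end
end

section
/- For every ε ∈ 𝔽_q^* and every nonempty word 𝔲 over Γ, Δ(φ_ε(𝔲)) = (φ_ε ⊗ id)(Δ(𝔲)) + (id ⊗ φ_ε − φ_ε ⊗ id)(1 ⊗ 𝔲). -/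
open scoped BigOperators TensorProduct

noncomputable section

variable {F : Type} [Field F] [Fintype F]

/-- The concatenation product on `𝔇`, as a bilinear map. -/
def concatL (F : Type) [Field F] [Fintype F] : Dalg F →ₗ[F] Dalg F →ₗ[F] Dalg F :=
  Finsupp.lsum F fun w =>
    LinearMap.toSpanSingleton F _
      (Finsupp.lsum F fun w' => LinearMap.toSpanSingleton F (Dalg F) (wd (w ++ w')))

/-- The product on `𝔇 ⊗ 𝔇` given by concatenation in the first component and
shuffle in the second: `(a ⊗ b)·(c ⊗ d) = (a·c) ⊗ (b ⧢ d)`. -/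
def tensorMul (S : ShuffleData F) :
    TensorProduct F (Dalg F) (Dalg F) →ₗ[F]
      TensorProduct F (Dalg F) (Dalg F) →ₗ[F] TensorProduct F (Dalg F) (Dalg F) :=
  (TensorProduct.homTensorHomMap (RingHom.id F) (Dalg F) (Dalg F) (Dalg F) (Dalg F)).comp
    (TensorProduct.map (concatL F) S.sh)

/-- The componentwise shuffle product on `𝔇 ⊗ 𝔇`:
`(a ⊗ b) ⧢ (c ⊗ d) = (a ⧢ c) ⊗ (b ⧢ d)`. -/
def shT (S : ShuffleData F) :
    TensorProduct F (Dalg F) (Dalg F) →ₗ[F]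
      TensorProduct F (Dalg F) (Dalg F) →ₗ[F] TensorProduct F (Dalg F) (Dalg F) :=
  (TensorProduct.homTensorHomMap (RingHom.id F) (Dalg F) (Dalg F) (Dalg F) (Dalg F)).comp
    (TensorProduct.map S.sh S.sh)

/-- The bracket `[𝔞]` of a `Σ`-word `𝔞 = x_{i_1} ⋯ x_{i_m}` (a word with all
characters trivial, recorded by its list of weights). -/
def bracket (S : ShuffleData F) (l : List ℕ+) : Dalg F :=
  (((-1 : F) ^ l.length) *
      (l.map fun i => deltaCoeff F 1 ((l.map fun n => (n : ℕ)).sum + 1) (i : ℕ)).prod) •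
    (l.map fun i => wd [(i, (1 : Fˣ))]).foldr (fun x acc => S.sh x acc) (wd ([] : Word F))

/-- The data of the coproduct `Δ : 𝔇 → 𝔇 ⊗ 𝔇`, an `𝔽_q`-linear map satisfying
its defining equations. -/
structure CoprodData (F : Type) [Field F] [Fintype F] (S : ShuffleData F) where
  cop : Dalg F →ₗ[F] TensorProduct F (Dalg F) (Dalg F)
  cop_nil : cop (wd []) = (wd []) ⊗ₜ[F] (wd [])
  cop_letter : ∀ (n : ℕ+) (ε : Fˣ),
    cop (wd [(n, ε)]) = (wd []) ⊗ₜ[F] (wd [(n, ε)]) +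
      ∑ r ∈ (Finset.Icc 1 (n : ℕ)).attach,
        ∑ c : Composition ((n : ℕ) - r.1),
          ((Nat.choose (r.1 + c.blocks.length - 2) c.blocks.length : F)) •
            ((wd [(⟨r.1, by have := Finset.mem_Icc.mp r.2; omega⟩, ε)]) ⊗ₜ[F]
              bracket S (c.blocks.attach.map fun i => (⟨i.1, c.blocks_pos i.2⟩ : ℕ+)))
  cop_cons : ∀ (x : Letter F) (v : Word F), v ≠ [] →
    cop (wd (x :: v)) = (wd []) ⊗ₜ[F] (wd (x :: v)) +
      tensorMul S (cop (wd [x]) - (wd []) ⊗ₜ[F] (wd [x])) (cop (wd v))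

/-- The weight of a word. -/
def wordWeight (w : Word F) : ℕ := (w.map fun x => ((x.1 : ℕ))).sum

/-- The weight-`n` graded piece `𝔇_n` of `𝔇`. -/
def Dw (F : Type) [Field F] [Fintype F] (n : ℕ) : Submodule F (Dalg F) :=
  Submodule.span F (wd '' {w : Word F | wordWeight w = n})

/-- The counit `ε : 𝔇 → 𝔽_q`. -/
def counitL (F : Type) [Field F] [Fintype F] : Dalg F →ₗ[F] F :=
  Finsupp.lapply ([] : Word F)

lemma horiz_wd_nil (ε : Fˣ) : horiz ε (wd ([] : Word F)) = wd [] := by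
  simp [horiz, wd, Finsupp.mapDomain_single]

lemma horiz_wd_cons (ε : Fˣ) (a : ℕ+) (α : Fˣ) (t : Word F) :
    horiz ε (wd ((a, α) :: t)) = wd ((a, ε * α) :: t) := by
  simp [horiz, wd, Finsupp.mapDomain_single]

lemma concatL_wd (w w' : Word F) : concatL F (wd w) (wd w') = wd (w ++ w') := by
  simp [concatL, wd, Finsupp.lsum_single, LinearMap.toSpanSingleton_apply]

lemma horiz_comp_concatL (ε : Fˣ) (a : ℕ+) (α : Fˣ) (t : Word F) :
    (horiz ε).comp (concatL F (wd ((a, α) :: t))) =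
      concatL F (wd ((a, ε * α) :: t)) := by
  refine Finsupp.lhom_ext fun w' c => ?_
  have h : (Finsupp.single w' c : Dalg F) = c • wd w' := by
    simp [wd, Finsupp.smul_single]
  rw [h, map_smul, map_smul]
  congr 1
  rw [LinearMap.comp_apply, concatL_wd, concatL_wd]
  exact horiz_wd_cons ε a α (t ++ w')

lemma tensorMul_tmul (S : ShuffleData F) (s b : Dalg F)
    (Y : TensorProduct F (Dalg F) (Dalg F)) :
    tensorMul S (s ⊗ₜ[F] b) Y = TensorProduct.map (concatL F s) (S.sh b) Y := by
  simp [tensorMul, TensorProduct.homTensorHomMap_apply]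

lemma map_horiz_tensorMul (S : ShuffleData F) (ε : Fˣ) (a : ℕ+) (α : Fˣ)
    (t : Word F) (b : Dalg F) (Y : TensorProduct F (Dalg F) (Dalg F)) :
    TensorProduct.map (horiz ε) (LinearMap.id : Dalg F →ₗ[F] Dalg F)
        (tensorMul S (wd ((a, α) :: t) ⊗ₜ[F] b) Y) =
      tensorMul S (wd ((a, ε * α) :: t) ⊗ₜ[F] b) Y := by
  rw [tensorMul_tmul, tensorMul_tmul, ← LinearMap.comp_apply, ← TensorProduct.map_comp,
    horiz_comp_concatL, LinearMap.id_comp]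

lemma abelHelper {M : Type*} [AddCommGroup M] (A A' s : M) :
    A' + s = A + s + A' - A :=
  ((congrArg (· - A) ((add_assoc A s A').trans (congrArg (A + ·) (add_comm s A')))).trans
    (add_sub_cancel_left A (A' + s))).symm

lemma cop_horiz_letter (S : ShuffleData F) (C : CoprodData F S) (ε : Fˣ)
    (n : ℕ+) (α : Fˣ) :
    C.cop (wd [(n, ε * α)]) =
      TensorProduct.map (horiz ε) (LinearMap.id : Dalg F →ₗ[F] Dalg F)
        (C.cop (wd [(n, α)])) +
      (wd []) ⊗ₜ[F] (wd [(n, ε * α)]) - (wd []) ⊗ₜ[F] (wd [(n, α)]) := by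
  rw [C.cop_letter n (ε * α), C.cop_letter n α]
  rw [map_add, map_sum]
  simp only [map_sum, map_smul, TensorProduct.map_tmul, horiz_wd_cons, horiz_wd_nil,
    LinearMap.id_apply]
  simp only [horiz, wd, Finsupp.lmapDomain_apply, Finsupp.mapDomain_single]
  exact abelHelper (M := TensorProduct F (Dalg F) (Dalg F)) _ _ _

lemma key_tensorMul (S : ShuffleData F) (C : CoprodData F S) (ε : Fˣ)
    (n : ℕ+) (α : Fˣ) (Y : TensorProduct F (Dalg F) (Dalg F)) :
    tensorMul S (C.cop (wd [(n, ε * α)]) - (wd []) ⊗ₜ[F] (wd [(n, ε * α)])) Y =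
      TensorProduct.map (horiz ε) (LinearMap.id : Dalg F →ₗ[F] Dalg F)
        (tensorMul S (C.cop (wd [(n, α)]) - (wd []) ⊗ₜ[F] (wd [(n, α)])) Y) := by
  have e : ∀ δ : Fˣ, C.cop (wd [(n, δ)]) - (wd []) ⊗ₜ[F] (wd [(n, δ)]) =
      ∑ r ∈ (Finset.Icc 1 (n : ℕ)).attach,
        ∑ c : Composition ((n : ℕ) - r.1),
          ((Nat.choose (r.1 + c.blocks.length - 2) c.blocks.length : F)) •
            ((wd [(⟨r.1, by have := Finset.mem_Icc.mp r.2; omega⟩, δ)]) ⊗ₜ[F]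
              bracket S (c.blocks.attach.map fun i => (⟨i.1, c.blocks_pos i.2⟩ : ℕ+))) := by
    intro δ
    rw [C.cop_letter n δ]
    exact add_sub_cancel_left ((wd ([]:Word F)) ⊗ₜ[F] (wd [(n, δ)])) _
  rw [e (ε * α), e α]
  rw [map_sum, map_sum]
  simp only [LinearMap.coe_sum, Finset.sum_apply, map_smul, LinearMap.smul_apply,
    map_sum]
  refine Finset.sum_congr rfl fun r _ => ?_
  refine Finset.sum_congr rfl fun c _ => ?_
  exact congrArg _ (map_horiz_tensorMul S ε _ α [] _ Y).symm

/-- behavior of the coproduct under horizontal maps: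
`Δ(φ_ε(𝔲)) = (φ_ε ⊗ id)(Δ(𝔲)) + (id ⊗ φ_ε)(1 ⊗ 𝔲) − (φ_ε ⊗ id)(1 ⊗ 𝔲)`. -/
theorem cop_horiz (F : Type) [Field F] [Fintype F] (S : ShuffleData F)
    (C : CoprodData F S) (ε : Fˣ) (u : Word F) (hu : u ≠ []) :
    C.cop (horiz ε (wd u)) =
      TensorProduct.map (horiz ε) (LinearMap.id : Dalg F →ₗ[F] Dalg F) (C.cop (wd u)) +
      TensorProduct.map (LinearMap.id : Dalg F →ₗ[F] Dalg F) (horiz ε)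
        ((wd []) ⊗ₜ[F] (wd u)) -
      TensorProduct.map (horiz ε) (LinearMap.id : Dalg F →ₗ[F] Dalg F)
        ((wd []) ⊗ₜ[F] (wd u)) := by
  match u with
  | [] => exact absurd rfl hu
  | (n, α) :: v =>
    match v with
    | [] =>
      rw [horiz_wd_cons, cop_horiz_letter S C ε n α]
      simp only [TensorProduct.map_tmul, horiz_wd_cons, horiz_wd_nil, LinearMap.id_apply]
    | y :: w =>
      have hv : (y :: w : Word F) ≠ [] := by simp
      rw [horiz_wd_cons, C.cop_cons (n, ε * α) _ hv, C.cop_cons (n, α) _ hv]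
      rw [key_tensorMul S C ε n α]
      simp only [map_add, TensorProduct.map_tmul, horiz_wd_cons, horiz_wd_nil,
        LinearMap.id_apply]
      exact abelHelper (M := TensorProduct F (Dalg F) (Dalg F)) _ _ _

end
end
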